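/- Let x, y ∈ [1/2, 1] satisfy x = y² + y³. Then x ≤ (√5 − 1)/2 if and only if y ≤ (√5 − 1)/2, and x < (√5 − 1)/2 if and only if y < (√5 − 1)/2. Consequently, if a cubic graph G has connective constant μ(G) ≥ φ = (√5+1)/2 (so μ(G)^{-1} ≤ φ^{-1}), then any graph obtained from G by a Fisher transformation, with the connective-constant relation μ(G)^{-1} = μ₁^{-2} + μ₁^{-3} and μ₁^{-1} ∈ [1/2,1], also satisfies μ₁ ≥ φ. -/

import Mathlib

/-- **Theorem (monotone comparison with the golden-mean fixed point).**
If `x, y ∈ [1/2, 1]` and `x = y² + y³`, then `x ≤ (√5 − 1)/2 ↔ y ≤ (√5 − 1)/2`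
and `x < (√5 − 1)/2 ↔ y < (√5 − 1)/2`.  Consequently, if `μ ≥ φ = (√5+1)/2` and
`μ⁻¹ = μ₁⁻² + μ₁⁻³` with `μ₁⁻¹ ∈ [1/2, 1]`, then `μ₁ ≥ φ`. -/
theorem golden_comparison (x y : ℝ)
    (hx : x ∈ Set.Icc (1 / 2 : ℝ) 1) (hy : y ∈ Set.Icc (1 / 2 : ℝ) 1)
    (hrel : x = y ^ 2 + y ^ 3) :
    (x ≤ (Real.sqrt 5 - 1) / 2 ↔ y ≤ (Real.sqrt 5 - 1) / 2) ∧
    (x < (Real.sqrt 5 - 1) / 2 ↔ y < (Real.sqrt 5 - 1) / 2) ∧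
    (∀ μ μ₁ : ℝ, 0 < μ →
      μ⁻¹ = μ₁⁻¹ ^ 2 + μ₁⁻¹ ^ 3 → μ₁⁻¹ ∈ Set.Icc (1 / 2 : ℝ) 1 →
      (Real.sqrt 5 + 1) / 2 ≤ μ → (Real.sqrt 5 + 1) / 2 ≤ μ₁) := by
  obtain ⟨hy1, hy2⟩ := hy
  have hs2 : Real.sqrt 5 ^ 2 = 5 := Real.sq_sqrt (by norm_num)
  have hs : 2 ≤ Real.sqrt 5 := by nlinarith [Real.sqrt_nonneg 5]
  have hs3 : Real.sqrt 5 ≤ 3 := by nlinarith [Real.sqrt_nonneg 5]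
  set c : ℝ := (Real.sqrt 5 - 1) / 2 with hc
  have hc1 : (1 / 2 : ℝ) ≤ c := by rw [hc]; linarith
  have hc2 : c ≤ 1 := by rw [hc]; linarith
  have hfix : c ^ 2 + c ^ 3 = c := by rw [hc]; nlinarith [hs2]
  have hmono : ∀ a b : ℝ, 1 / 2 ≤ a → 1 / 2 ≤ b → a < b →
      a ^ 2 + a ^ 3 < b ^ 2 + b ^ 3 := by
    intro a b ha hb hab
    nlinarith [sq_nonneg (a + b), sq_nonneg a, sq_nonneg b,
      mul_pos (sub_pos.2 hab) (by linarith : (0:ℝ) < a + b)]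
  have hmono' : ∀ a b : ℝ, 1 / 2 ≤ a → 1 / 2 ≤ b → a ≤ b →
      a ^ 2 + a ^ 3 ≤ b ^ 2 + b ^ 3 := by
    intro a b ha hb hab
    rcases eq_or_lt_of_le hab with rfl | h
    · exact le_rfl
    · exact le_of_lt (hmono a b ha hb h)
  have iff1 : x ≤ c ↔ y ≤ c := by
    constructor
    · intro h
      by_contra h'
      push_neg at h'
      have := hmono c y hc1 hy1 h'
      rw [hfix, ← hrel] at this
      linarith
    · intro h
      have := hmono' y c hy1 hc1 h
      rw [hfix, ← hrel] at this
      exact this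
  have iff2 : x < c ↔ y < c := by
    constructor
    · intro h
      by_contra h'
      push_neg at h'
      have := hmono' c y hc1 hy1 h'
      rw [hfix, ← hrel] at this
      linarith
    · intro h
      have := hmono y c hy1 hc1 h
      rw [hfix, ← hrel] at this
      exact this
  refine ⟨iff1, iff2, ?_⟩
  intro μ μ₁ hμ hrelμ hmem hφ
  obtain ⟨hm1, hm2⟩ := hmem
  have hφpos : (0:ℝ) < (Real.sqrt 5 + 1) / 2 := by linarith
  have hprod : (Real.sqrt 5 + 1) / 2 * c = 1 := by rw [hc]; nlinarith
  have hinv : ((Real.sqrt 5 + 1) / 2)⁻¹ = c := inv_eq_of_mul_eq_one_right hprod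
  have hμinv : μ⁻¹ ≤ c := by
    rw [← hinv]
    exact inv_anti₀ hφpos hφ
  have h1 : μ₁⁻¹ ≤ c := by
    by_contra h'
    push_neg at h'
    have := hmono c μ₁⁻¹ hc1 hm1 h'
    rw [hfix, ← hrelμ] at this
    linarith
  have hμ₁pos : 0 < μ₁ := by
    have : (0:ℝ) < μ₁⁻¹ := by linarith
    exact inv_pos.mp this
  rw [← hinv] at h1
  exact (inv_le_inv₀ hμ₁pos hφpos).mp h1
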